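/- Let x be an infinite binary word and a a single letter in {0,1}. Then x is overlap-free if and only if μ(x) is overlap-free, where μ is the Thue–Morse morphism. -/

import Mathlib

/-- An overlap: a word of the form a x a x a, with `a` a single letter. -/
def Overlap (w : List (Fin 2)) : Prop :=
  ∃ (a : Fin 2) (x : List (Fin 2)), w = [a] ++ x ++ [a] ++ x ++ [a]

/-- `w` occurs as a (contiguous) factor of the infinite word `x`. -/
def FactorOf (w : List (Fin 2)) (x : ℕ → Fin 2) : Prop :=
  ∃ i, w = (List.range w.length).map (fun j => x (i + j))

/-- An infinite binary word is overlap-free if no finite factor is an overlap. -/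
def OverlapFree (x : ℕ → Fin 2) : Prop :=
  ∀ w, FactorOf w x → ¬ Overlap w

/-- The Thue–Morse morphism applied to an infinite word. -/
def mu (x : ℕ → Fin 2) : ℕ → Fin 2 :=
  fun n => if n % 2 = 0 then x (n / 2) else 1 - x (n / 2)

/-- Prepend a finite word to an infinite word. -/
def prepend (p : List (Fin 2)) (w : ℕ → Fin 2) : ℕ → Fin 2 :=
  fun n => if h : n < p.length then p.get ⟨n, h⟩ else w (n - p.length)

/-- `x` begins with the finite word `p`. -/
def BeginsWith (x : ℕ → Fin 2) (p : List (Fin 2)) : Prop :=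
  ∀ i < p.length, x i = p.getD i 0

/-- Auxiliary: `y` has a "period pattern": positions p..p+2t with period t ≥ 1. -/
def HasPer (y : ℕ → Fin 2) : Prop :=
  ∃ p t, 1 ≤ t ∧ ∀ j ≤ t, y (p + j) = y (p + j + t)

lemma mu_two (x : ℕ → Fin 2) (m : ℕ) : mu x (2 * m) = x m := by
  unfold mu
  rw [if_pos (by omega)]
  congr 1
  omega

lemma mu_two' (x : ℕ → Fin 2) (m : ℕ) : mu x (2 * m + 1) = 1 - x m := by
  unfold mu
  rw [if_neg (by omega), show (2 * m + 1) / 2 = m by omega]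

lemma fin2_sub_inj : ∀ a b : Fin 2, 1 - a = 1 - b → a = b := by decide

lemma fin2_ne_sub : ∀ a : Fin 2, a ≠ 1 - a := by decide

lemma fin2_sub_sub : ∀ a : Fin 2, 1 - (1 - a) = a := by decide

lemma overlapFree_iff_not_hasPer (y : ℕ → Fin 2) :
    OverlapFree y ↔ ¬ HasPer y := by
  constructor
  · rintro hof ⟨p, t, ht, h⟩
    set f : ℕ → Fin 2 := fun j => y (p + j) with hf
    set v : List (Fin 2) := (List.range (t - 1)).map (fun j => y (p + 1 + j)) with hv
    set w : List (Fin 2) := (List.range (2 * t + 1)).map f with hw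
    refine hof w ⟨p, by simp [hw, hf]⟩ ⟨y p, v, ?_⟩
    have h1 : (List.range t).map f = [y p] ++ v := by
      rw [show t = (t - 1) + 1 by omega, List.range_succ_eq_map, List.map_cons,
        List.map_map]
      refine congrArg₂ _ ?_ ?_
      · simp [hf]
      · apply List.map_congr_left
        intro j hj
        simp only [Function.comp, hf]
        congr 1
        omega
    have h2 : (List.range (t + 1)).map (fun j => f (t + j)) = ([y p] ++ v) ++ [y p] := by
      have e1 : (List.range (t + 1)).map (fun j => f (t + j)) = (List.range (t + 1)).map f := by
        apply List.map_congr_left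
        intro j hj
        rw [List.mem_range] at hj
        have := h j (by omega)
        simp only [hf]
        rw [show p + (t + j) = p + j + t by omega]
        exact this.symm
      rw [e1, List.range_succ, List.map_append, h1, List.map_singleton]
      have := h 0 (by omega)
      simp only [hf]
      rw [show p + 0 + t = p + t by omega] at this
      rw [show p + 0 = p by omega] at this
      rw [← this]
    have : w = ((List.range t).map f) ++ ((List.range (t + 1)).map (fun j => f (t + j))) := by
      rw [hw, show 2 * t + 1 = t + (t + 1) by omega, List.range_add, List.map_append,
        List.map_map]
      rfl
    rw [this, h1, h2]
    simp [List.append_assoc]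
  · rintro hnp w ⟨i, hfac⟩ ⟨a, v, hov⟩
    apply hnp
    set t := v.length + 1 with hT
    refine ⟨i, t, by omega, ?_⟩
    have hlen : w.length = 2 * t + 1 := by
      rw [hov]; simp [hT]; omega
    have hget : ∀ j (hj : j < w.length), w[j] = y (i + j) := by
      intro j hj
      rw [List.getElem_of_eq hfac]
      simp
    intro j hj
    have hj1 : j < w.length := by omega
    have hj2 : j + t < w.length := by omega
    rw [show i + j + t = i + (j + t) by omega, ← hget j hj1, ← hget (j + t) (by omega)]
    -- w = ([a] ++ v ++ [a]) ++ (v ++ [a])  and  w = ([a] ++ v) ++ ([a] ++ v ++ [a])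
    have hd1 : w = ([a] ++ v ++ [a]) ++ (v ++ [a]) := by rw [hov]; simp [List.append_assoc]
    have hd2 : w = ([a] ++ v) ++ ([a] ++ v ++ [a]) := by rw [hov]; simp [List.append_assoc]
    have hul : ([a] ++ v ++ [a]).length = t + 1 := by simp [hT]
    have hlhs : w[j]'hj1 = ([a] ++ v ++ [a])[j]'(by rw [hul]; omega) := by
      rw [List.getElem_of_eq hd1]
      exact List.getElem_append_left (by rw [hul]; omega)
    have hrhs : w[j + t]'hj2 = ([a] ++ v ++ [a])[j]'(by rw [hul]; omega) := by
      rw [List.getElem_of_eq hd2]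
      have hl2 : ([a] ++ v).length = t := by simp [hT]
      rw [List.getElem_append_right (by rw [hl2]; omega)]
      congr 1
      rw [hl2]; omega
    rw [hlhs, hrhs]

lemma hasPer_mu_iff (x : ℕ → Fin 2) : HasPer x ↔ HasPer (mu x) := by
  constructor
  · rintro ⟨p, t, ht, h⟩
    refine ⟨2 * p, 2 * t, by omega, ?_⟩
    intro j hj
    rcases Nat.even_or_odd j with ⟨k, hk⟩ | ⟨k, hk⟩
    · rw [show 2 * p + j + 2 * t = 2 * (p + k + t) by omega, mu_two,
        show 2 * p + j = 2 * (p + k) by omega, mu_two]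
      exact h k (by omega)
    · rw [show 2 * p + j + 2 * t = 2 * (p + k + t) + 1 by omega, mu_two',
        show 2 * p + j = 2 * (p + k) + 1 by omega, mu_two']
      rw [h k (by omega)]
  · rintro ⟨p, q, hq, h⟩
    rcases Nat.even_or_odd q with ⟨t, hqt⟩ | hodd
    · -- q = 2t even: pull back the period to x
      have ht : 1 ≤ t := by omega
      refine ⟨p / 2, t, ht, ?_⟩
      intro j hj
      rcases Nat.even_or_odd p with ⟨s, hps⟩ | ⟨s, hps⟩
      · have := h (2 * j) (by omega)
        rw [show p + 2 * j + q = 2 * (s + j + t) by omega, mu_two,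
          show p + 2 * j = 2 * (s + j) by omega, mu_two] at this
        rw [show p / 2 + j = s + j by omega]
        exact this
      · have := h (2 * j) (by omega)
        rw [show p + 2 * j + q = 2 * (s + j + t) + 1 by omega, mu_two',
          show p + 2 * j = 2 * (s + j) + 1 by omega, mu_two'] at this
        rw [show p / 2 + j = s + j by omega]
        exact fin2_sub_inj _ _ this
    · -- q odd: contradiction
      exfalso
      obtain ⟨m, hm⟩ := hodd
      have halt : ∀ j, j + 1 ≤ 2 * q → mu x (p + j + 1) = 1 - mu x (p + j) := by
        intro j hj
        rcases Nat.even_or_odd (p + j) with ⟨k, hk⟩ | hodd'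
        · rw [show p + j + 1 = 2 * k + 1 by omega, mu_two', show p + j = 2 * k by omega,
            mu_two]
        · by_cases hcase : j + 1 ≤ q
          · obtain ⟨k, hk⟩ : Even (p + j + q) := by
              rcases hodd' with ⟨k, hk⟩; exact ⟨(2 * k + 1 + q) / 2, by omega⟩
            have e1 := h (j + 1) (by omega)
            have e2 := h j (by omega)
            rw [show p + (j + 1) + q = 2 * k + 1 by omega, show p + (j + 1) = p + j + 1 by omega] at e1
            rw [show p + j + q = 2 * k by omega] at e2
            rw [e1, mu_two', e2, mu_two]
          · have hjq : q ≤ j := by omega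
            obtain ⟨k, hk⟩ : Even (p + (j - q)) := by
              rcases hodd' with ⟨k, hk⟩; exact ⟨(p + (j - q)) / 2, by omega⟩
            have e1 := h (j - q + 1) (by omega)
            have e2 := h (j - q) (by omega)
            rw [show p + (j - q + 1) + q = p + j + 1 by omega,
              show p + (j - q + 1) = 2 * k + 1 by omega] at e1
            rw [show p + (j - q) + q = p + j by omega, show p + (j - q) = 2 * k by omega] at e2
            rw [← e1, ← e2, mu_two', mu_two]
      have hstep : ∀ j ≤ q, mu x (p + j) = if j % 2 = 0 then mu x p else 1 - mu x p := by
        intro j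
        induction j with
        | zero => intro _; simp
        | succ n ih =>
          intro hn
          have h1 := halt n (by omega)
          rw [show p + (n + 1) = p + n + 1 by omega, h1, ih (by omega)]
          by_cases hpar : n % 2 = 0
          · rw [if_pos hpar, if_neg (by omega)]
          · rw [if_neg hpar, if_pos (by omega), fin2_sub_sub]
      have hq' := hstep q (le_refl q)
      rw [if_neg (by omega)] at hq'
      have h0 := h 0 (by omega)
      simp only [Nat.add_zero] at h0
      rw [← h0] at hq'
      exact fin2_ne_sub (mu x p) hq'

theorem muInf_overlapFree_iff (x : ℕ → Fin 2) (a : Fin 2) :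
    OverlapFree x ↔ OverlapFree (mu x) := by
  rw [overlapFree_iff_not_hasPer, overlapFree_iff_not_hasPer]
  exact not_congr (hasPer_mu_iff x)
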